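/- A single pass of stable sorting by a higher-order key preserves the lexicographic invariant: if a list is sorted lexicographically by the lower k bytes (as a secondary key with stability), then stably sorting it by byte k yields a list sorted lexicographically by the lower k+1 bytes. -/

import Mathlib

/-- The `k`-th byte (least significant first) of a natural number. -/
def byteKey (k n : ℕ) : ℕ := n / 256 ^ k % 256

/-- Stable sort of a list by a natural-number key (merge sort is stable). -/
def stableSortBy (f : ℕ → ℕ) (l : List ℕ) : List ℕ :=
  l.mergeSort (fun a b => decide (f a ≤ f b))

/-- One radix-sort pass preserves the lexicographic invariant: if a list of
naturals `< 2^64` is sorted by the lower `k` bytes (i.e. by `n % 256^k`), then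
stably sorting it by byte `k` yields a list sorted by the lower `k+1` bytes
(i.e. by `n % 256^(k+1)`). -/
theorem stmt10 (k : ℕ) (l : List ℕ) (hl : ∀ n ∈ l, n < 2 ^ 64)
    (hsorted : l.Pairwise (fun a b => a % 256 ^ k ≤ b % 256 ^ k)) :
    (stableSortBy (byteKey k) l).Pairwise
      (fun a b => a % 256 ^ (k + 1) ≤ b % 256 ^ (k + 1)) := by
  classical
  set le : ℕ → ℕ → Bool := fun a b => decide (byteKey k a ≤ byteKey k b) with hle
  have trans : ∀ (a b c : ℕ), le a b → le b c → le a c := by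
    intro a b c h1 h2
    simp only [hle, decide_eq_true_eq] at *
    omega
  have total : ∀ (a b : ℕ), le a b || le b a := by
    intro a b
    simp only [hle, Bool.or_eq_true, decide_eq_true_eq]
    omega
  have hsortedkey : (stableSortBy (byteKey k) l).Pairwise (fun a b => le a b) :=
    List.pairwise_mergeSort trans total l
  rw [List.pairwise_iff_forall_sublist]
  intro a b hab
  have hkey : byteKey k a ≤ byteKey k b := by
    have := (List.pairwise_iff_forall_sublist.mp hsortedkey) hab
    simpa [hle] using this
  have hmoda : a % 256 ^ (k + 1) = a % 256 ^ k + 256 ^ k * byteKey k a := by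
    rw [pow_succ]; exact Nat.mod_mul
  have hmodb : b % 256 ^ (k + 1) = b % 256 ^ k + 256 ^ k * byteKey k b := by
    rw [pow_succ]; exact Nat.mod_mul
  rcases lt_or_eq_of_le hkey with hlt | heq
  · have ha : a % 256 ^ k < 256 ^ k := Nat.mod_lt _ (by positivity)
    rw [hmoda, hmodb]
    have h1 : 256 ^ k * (byteKey k a + 1) ≤ 256 ^ k * byteKey k b :=
      Nat.mul_le_mul_left _ hlt
    have h2 : 256 ^ k * (byteKey k a + 1) = 256 ^ k * byteKey k a + 256 ^ k := by ring
    omega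
  · -- equal keys: use stability
    rw [hmoda, hmodb, ← heq]
    have hlow : a % 256 ^ k ≤ b % 256 ^ k := by
      set p : ℕ → Bool := fun x => decide (byteKey k x = byteKey k a) with hp
      have hcpair : (l.filter p).Pairwise (fun a b => le a b) := by
        refine List.Pairwise.imp_of_mem ?_ (List.pairwise_iff_forall_sublist.mpr
          (fun {x y} _ => trivial) : (l.filter p).Pairwise (fun _ _ => True))
        intro x y hx hy _
        have hx' := List.of_mem_filter hx
        have hy' := List.of_mem_filter hy
        simp only [hp, decide_eq_true_eq] at hx' hy'
        simp [hle, hx', hy']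
      have hsub : List.Sublist (l.filter p) (stableSortBy (byteKey k) l) :=
        List.sublist_mergeSort trans total hcpair (List.filter_sublist (l := l))
      have hsub2 : List.Sublist (l.filter p) ((stableSortBy (byteKey k) l).filter p) := by
        have := hsub.filter p
        rwa [List.filter_filter, (by funext x; simp : (fun x => p x && p x) = p)] at this
      have hlen : ((stableSortBy (byteKey k) l).filter p).length = (l.filter p).length := by
        exact ((List.mergeSort_perm l le).filter p).length_eq
      have heqf : l.filter p = (stableSortBy (byteKey k) l).filter p :=
        hsub2.eq_of_length hlen.symm
      have hpa : p a = true := by simp [hp]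
      have hpb : p b = true := by simp [hp, heq]
      have habf : List.Sublist [a, b] ((stableSortBy (byteKey k) l).filter p) := by
        have := hab.filter p
        rwa [show [a, b].filter p = [a, b] by simp [hpa, hpb]] at this
      rw [← heqf] at habf
      have habl : List.Sublist [a, b] l := habf.trans (List.filter_sublist (l := l))
      exact (List.pairwise_iff_forall_sublist.mp hsorted) habl
    exact Nat.add_le_add_right hlow _
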